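/- Let X be an integral scheme such that for every point x the stalk O_{X,x} is a valuation ring, and let f : X → S be a morphism of schemes. Then f is separated if and only if for every pair of points x, y ∈ X such that f(x) = f(y) and the images of O_{X,x} and O_{X,y} under the canonical injections into the function field k(X) coincide as subrings of k(X), one has x = y. In particular (taking S the spectrum of the integers), X itself is separated if and only if no two distinct points of X have the same local ring inside k(X). -/

import Mathlib

open AlgebraicGeometry CategoryTheory

/-- A commutative ring is a valuation ring if it is a domain and for all `a`, `b` there
exists `c` with `a * c = b` or `b * c = a`. -/
def IsValuationRing (S : Type*) [CommRing S] : Prop :=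
  IsDomain S ∧ ∀ a b : S, ∃ c : S, a * c = b ∨ b * c = a

section AuxPrufer

open CategoryTheory.Limits TopCat

section Aux

variable {W X : Scheme}

lemma aux_stalk_comp (Δ : X ⟶ W) (p : W ⟶ X) (hp : Δ ≫ p = 𝟙 X)
    (η : X) (w : W) (h : Δ.base η ⤳ w) (hηw : η ⤳ p.base w) :
    p.stalkMap w ≫ W.presheaf.stalkSpecializes h ≫ Δ.stalkMap η =
      X.presheaf.stalkSpecializes hηw := by
  rw [← Category.assoc, ← Scheme.Hom.stalkSpecializes_stalkMap p (Δ.base η) w h, Category.assoc,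
    ← Scheme.Hom.stalkMap_comp, Scheme.Hom.stalkMap_congr_hom (Δ ≫ p) (𝟙 X) hp, Scheme.Hom.stalkMap_id]
  refine TopCat.Presheaf.stalk_hom_ext _ fun U hU => ?_
  simp [TopCat.Presheaf.germ_stalkSpecializes, TopCat.Presheaf.stalkCongr_hom]
  erw [TopCat.Presheaf.germ_stalkSpecializes]
  exact specializes_of_eq (by rw [← Scheme.Hom.comp_apply, hp]; rfl)

end Aux

section Range

variable {X S : Scheme} [IsIntegral X]

lemma aux_range (hval : ∀ x : X, IsValuationRing (X.presheaf.stalk x))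
    (f : X ⟶ S) (p : pullback f f ⟶ X)
    (hp : pullback.diagonal f ≫ p = 𝟙 X)
    (w : (pullback f f : Scheme)) (h : (pullback.diagonal f).base (genericPoint X) ⤳ w) :
    Set.range (algebraMap (X.presheaf.stalk (p.base w)) X.functionField) =
      Set.range ((pullback f f).presheaf.stalkSpecializes h ≫
        (pullback.diagonal f).stalkMap (genericPoint X) :
          (pullback f f).presheaf.stalk w ⟶ X.functionField) := by
  set x := p.base w with hx
  haveI : IsDomain (X.presheaf.stalk x) := (hval x).1
  haveI : PreValuationRing (X.presheaf.stalk x) := ⟨(hval x).2⟩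
  haveI : ValuationRing (X.presheaf.stalk x) := ⟨⟩
  have hηw : genericPoint X ⤳ x := (genericPoint_spec X).specializes trivial
  set α : X.presheaf.stalk x ⟶ (pullback f f).presheaf.stalk w := p.stalkMap w with hα
  set β : (pullback f f).presheaf.stalk w ⟶ X.functionField :=
    (pullback f f).presheaf.stalkSpecializes h ≫
      (pullback.diagonal f).stalkMap (genericPoint X) with hβ
  have hcomp : β.hom.comp α.hom =
      algebraMap (X.presheaf.stalk x) X.functionField := by
    have := aux_stalk_comp (pullback.diagonal f) p hp (genericPoint X) w h hηw
    rw [hβ, ← Category.assoc] at *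
    exact congrArg CommRingCat.Hom.hom this
  have hbij := bijective_rangeRestrict_comp_of_valuationRing
    (K := X.functionField) α.hom β.hom hcomp
  refine Set.Subset.antisymm ?_ ?_
  · rintro _ ⟨a, rfl⟩
    exact ⟨α a, by rw [← hcomp]; rfl⟩
  · rintro _ ⟨b, rfl⟩
    obtain ⟨a, ha⟩ := hbij.2 ⟨β b, b, rfl⟩
    refine ⟨a, ?_⟩
    have := congrArg Subtype.val ha
    simp only [RingHom.comp_apply] at this ⊢
    rw [← hcomp]
    exact this

end Range

section Closed

variable {X S : Scheme} [IsIntegral X]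

lemma aux_closed (hval : ∀ x : X, IsValuationRing (X.presheaf.stalk x))
    (f : X ⟶ S)
    (H : ∀ x y : X, f.base x = f.base y →
        Set.range (algebraMap (X.presheaf.stalk x) X.functionField) =
          Set.range (algebraMap (X.presheaf.stalk y) X.functionField) → x = y) :
    IsClosed (Set.range (pullback.diagonal f).base) := by
  have key : ∀ w : (pullback f f : Scheme),
      (pullback.diagonal f).base (genericPoint X) ⤳ w →
      w ∈ Set.range (pullback.diagonal f).base := by
    intro w h
    set x := (pullback.fst f f).base w with hxdef
    set y := (pullback.snd f f).base w with hydef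
    haveI : IsDomain (X.presheaf.stalk x) := (hval x).1
    haveI : PreValuationRing (X.presheaf.stalk x) := ⟨(hval x).2⟩
    haveI : ValuationRing (X.presheaf.stalk x) := ⟨⟩
    have hηx : genericPoint X ⤳ x := (genericPoint_spec X).specializes trivial
    have hηy : genericPoint X ⤳ y := (genericPoint_spec X).specializes trivial
    have hfeq : f.base x = f.base y := by
      rw [hxdef, hydef, ← Scheme.Hom.comp_apply, ← Scheme.Hom.comp_apply,
        pullback.condition]
    have hx := aux_range hval f (pullback.fst f f) (pullback.diagonal_fst f) w h
    have hy := aux_range hval f (pullback.snd f f) (pullback.diagonal_snd f) w h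
    have hxy : x = y := H x y hfeq (hx.trans hy.symm)
    set α : X.presheaf.stalk x ⟶ (pullback f f).presheaf.stalk w :=
      (pullback.fst f f).stalkMap w with hα
    set α' : X.presheaf.stalk y ⟶ (pullback f f).presheaf.stalk w :=
      (pullback.snd f f).stalkMap w with hα'
    set β : (pullback f f).presheaf.stalk w ⟶ X.functionField :=
      (pullback f f).presheaf.stalkSpecializes h ≫
        (pullback.diagonal f).stalkMap (genericPoint X) with hβ
    have hcomp : β.hom.comp α.hom =
        algebraMap (X.presheaf.stalk x) X.functionField := by
      have := aux_stalk_comp (pullback.diagonal f) (pullback.fst f f)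
        (pullback.diagonal_fst f) (genericPoint X) w h hηx
      rw [hβ, ← Category.assoc] at *
      exact congrArg CommRingCat.Hom.hom this
    have hcomp' : β.hom.comp α'.hom =
        algebraMap (X.presheaf.stalk y) X.functionField := by
      have := aux_stalk_comp (pullback.diagonal f) (pullback.snd f f)
        (pullback.diagonal_snd f) (genericPoint X) w h hηy
      rw [hβ, ← Category.assoc] at *
      exact congrArg CommRingCat.Hom.hom this
    have hbij := bijective_rangeRestrict_comp_of_valuationRing
      (K := X.functionField) α.hom β.hom hcomp
    set e := RingEquiv.ofBijective _ hbij with he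
    set φ : (pullback f f).presheaf.stalk w ⟶ X.presheaf.stalk x :=
      CommRingCat.ofHom (e.symm.toRingHom.comp β.hom.rangeRestrict :
        (pullback f f).presheaf.stalk w →+* X.presheaf.stalk x) with hφ
    have hαφ : α ≫ φ = 𝟙 (X.presheaf.stalk x) := by
      refine CommRingCat.hom_ext (RingHom.ext fun a => ?_)
      exact e.symm_apply_apply a
    have hφβ : ((algebraMap (X.presheaf.stalk x) X.functionField)).comp
        φ.hom = β.hom := by
      ext b
      have h3 : e (e.symm (β.hom.rangeRestrict b)) = β.hom.rangeRestrict b :=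
        e.apply_symm_apply _
      have h4 := congrArg Subtype.val h3
      rw [← hcomp]
      exact h4
    have hsurj : Function.Surjective φ :=
      e.symm.surjective.comp β.hom.rangeRestrict_surjective
    haveI hloc : IsLocalHom φ.hom :=
      IsLocalHom.of_surjective _ hsurj
    haveI hloc2 : IsLocalHom φ.hom := hloc
    have hspec : x ⤳ y := specializes_of_eq hxy
    have ht : α' ≫ φ = X.presheaf.stalkSpecializes hspec := by
      refine CommRingCat.hom_ext (RingHom.ext fun a => ?_)
      apply IsFractionRing.injective (X.presheaf.stalk x) X.functionField
      have h1 : (algebraMap (X.presheaf.stalk x) X.functionField) (φ (α' a)) = β (α' a) := by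
        exact DFunLike.congr_fun hφβ (α' a)
      have h2 := TopCat.Presheaf.stalkSpecializes_comp X.presheaf hηx hspec
      calc (algebraMap (X.presheaf.stalk x) X.functionField)
            ((α' ≫ φ : X.presheaf.stalk y ⟶ _) a)
          = β (α' a) := h1
        _ = (algebraMap (X.presheaf.stalk y) X.functionField) a := by rw [← hcomp']; rfl
        _ = X.presheaf.stalkSpecializes (hηx.trans hspec) a := rfl
        _ = (X.presheaf.stalkSpecializes hspec ≫ X.presheaf.stalkSpecializes hηx) a := by
            rw [h2]
        _ = (algebraMap (X.presheaf.stalk x) X.functionField)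
              ((X.presheaf.stalkSpecializes hspec : X.presheaf.stalk y ⟶ _) a) := rfl
    set u : Spec (X.presheaf.stalk x) ⟶ pullback f f :=
      Spec.map φ ≫ (pullback f f).fromSpecStalk w with hu
    set v : Spec (X.presheaf.stalk x) ⟶ pullback f f :=
      X.fromSpecStalk x ≫ pullback.diagonal f with hv
    have hufst : u ≫ pullback.fst f f = X.fromSpecStalk x := by
      have h1 : (pullback f f).fromSpecStalk w ≫ pullback.fst f f =
          Spec.map α ≫ X.fromSpecStalk x :=
        (Scheme.SpecMap_stalkMap_fromSpecStalk (pullback.fst f f)).symm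
      rw [hu, Category.assoc, h1, ← Category.assoc, ← Spec.map_comp, hαφ, Spec.map_id,
        Category.id_comp]
    have husnd : u ≫ pullback.snd f f = X.fromSpecStalk x := by
      have h1 : (pullback f f).fromSpecStalk w ≫ pullback.snd f f =
          Spec.map α' ≫ X.fromSpecStalk y :=
        (Scheme.SpecMap_stalkMap_fromSpecStalk (pullback.snd f f)).symm
      rw [hu, Category.assoc, h1, ← Category.assoc, ← Spec.map_comp, ht,
        Scheme.SpecMap_stalkSpecializes_fromSpecStalk hspec]
    have huv : u = v := by
      apply pullback.hom_ext
      · rw [hufst, hv, Category.assoc, pullback.diagonal_fst, Category.comp_id]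
      · rw [husnd, hv, Category.assoc, pullback.diagonal_snd, Category.comp_id]
    refine ⟨x, ?_⟩
    have h1 : u.base (IsLocalRing.closedPoint (X.presheaf.stalk x)) = w := by
      rw [hu]; exact (congrArg ((pullback f f).fromSpecStalk w) Spec_closedPoint).trans
        Scheme.fromSpecStalk_closedPoint
    have h2 : v.base (IsLocalRing.closedPoint (X.presheaf.stalk x)) =
        (pullback.diagonal f).base x := by
      rw [hv]; exact congrArg (pullback.diagonal f) Scheme.fromSpecStalk_closedPoint
    rw [← h2, ← huv, h1]
  have hrange : Set.range (pullback.diagonal f).base =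
      closure {(pullback.diagonal f).base (genericPoint X)} := by
    apply Set.Subset.antisymm
    · rintro _ ⟨a, rfl⟩
      exact specializes_iff_mem_closure.mp
        (((genericPoint_spec X).specializes trivial).map (pullback.diagonal f).base.hom.2)
    · intro w hw
      exact key w (specializes_iff_mem_closure.mpr hw)
  rw [hrange]
  exact isClosed_closure

end Closed

section Forward

variable {X S : Scheme} [IsIntegral X]

lemma aux_forward (hval : ∀ x : X, IsValuationRing (X.presheaf.stalk x))
    (f : X ⟶ S) (hsep : IsSeparated f) (x y : X)
    (hfxy : f.base x = f.base y)
    (hr : Set.range (algebraMap (X.presheaf.stalk x) X.functionField) =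
        Set.range (algebraMap (X.presheaf.stalk y) X.functionField)) :
    x = y := by
  haveI := hsep
  haveI : IsDomain (X.presheaf.stalk x) := (hval x).1
  haveI : PreValuationRing (X.presheaf.stalk x) := ⟨(hval x).2⟩
  haveI : ValuationRing (X.presheaf.stalk x) := ⟨⟩
  have huniq := IsSeparated.valuativeCriterion f
  have hηx : genericPoint X ⤳ x := (genericPoint_spec X).specializes trivial
  have hηy : genericPoint X ⤳ y := (genericPoint_spec X).specializes trivial
  set A := algebraMap (X.presheaf.stalk x) X.functionField with hA
  set B := algebraMap (X.presheaf.stalk y) X.functionField with hB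
  have injA : Function.Injective A := IsFractionRing.injective _ _
  have hR : B.range = A.range := SetLike.ext' (by
    rw [RingHom.coe_range, RingHom.coe_range]; exact hr.symm)
  set eA : X.presheaf.stalk x ≃+* A.range :=
    RingEquiv.ofBijective A.rangeRestrict
      ⟨fun a b hab => injA (congrArg Subtype.val hab), A.rangeRestrict_surjective⟩ with heA
  set ec : X.presheaf.stalk y ⟶ X.presheaf.stalk x :=
    CommRingCat.ofHom (eA.symm.toRingHom.comp ((Subring.inclusion hR.le).comp B.rangeRestrict) :
      X.presheaf.stalk y →+* X.presheaf.stalk x) with hec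
  have hAval : ∀ s : A.range, A (eA.symm s) = s.val := fun s =>
    congrArg Subtype.val (eA.apply_symm_apply s)
  have hAe : ∀ a : X.presheaf.stalk y, A (ec a) = B a := fun a =>
    hAval ((Subring.inclusion hR.le) (B.rangeRestrict a))
  have hesurj : Function.Surjective ec := by
    intro t
    have htB : A t ∈ B.range := by rw [hR]; exact ⟨t, rfl⟩
    obtain ⟨b, hb⟩ := htB
    refine ⟨b, injA ?_⟩
    rw [hAe]
    exact hb
  haveI : IsLocalHom ec.hom :=
    IsLocalHom.of_surjective _ hesurj
  haveI : IsLocalHom ec.hom := ‹IsLocalHom ec.hom›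
  have hw1 : Spec.map (CommRingCat.ofHom (algebraMap (X.presheaf.stalk x) X.functionField)) ≫
      X.fromSpecStalk x = X.fromSpecStalk (genericPoint X) :=
    Scheme.SpecMap_stalkSpecializes_fromSpecStalk hηx
  have hclaim : f.stalkMap y ≫ ec =
      S.presheaf.stalkSpecializes (specializes_of_eq hfxy) ≫ f.stalkMap x := by
    refine CommRingCat.hom_ext (RingHom.ext fun a => ?_)
    apply injA
    have h1 : A (ec (f.stalkMap y a)) = B (f.stalkMap y a) := hAe _
    have h2 := Scheme.Hom.stalkSpecializes_stalkMap_apply f (genericPoint X) y hηy a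
    have h3 := Scheme.Hom.stalkSpecializes_stalkMap_apply f (genericPoint X) x hηx
      (S.presheaf.stalkSpecializes (specializes_of_eq hfxy) a)
    have h4 := TopCat.Presheaf.stalkSpecializes_comp S.presheaf
      (f.base.hom.map_specializes hηx) (specializes_of_eq hfxy)
    calc A ((f.stalkMap y ≫ ec : S.presheaf.stalk (f.base y) ⟶ _) a)
        = B (f.stalkMap y a) := h1
      _ = X.presheaf.stalkSpecializes hηy (f.stalkMap y a) := rfl
      _ = f.stalkMap (genericPoint X)
            (S.presheaf.stalkSpecializes (f.base.hom.map_specializes hηy) a) := h2.symm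
      _ = f.stalkMap (genericPoint X)
            (S.presheaf.stalkSpecializes (f.base.hom.map_specializes hηx)
              (S.presheaf.stalkSpecializes (specializes_of_eq hfxy) a)) := by
          congr 1
          have h5 := congrArg (fun (g : S.presheaf.stalk (f.base y) ⟶
              S.presheaf.stalk (f.base (genericPoint X))) =>
                g.hom a) h4
          exact h5.symm
      _ = X.presheaf.stalkSpecializes hηx
            (f.stalkMap x (S.presheaf.stalkSpecializes (specializes_of_eq hfxy) a)) := h3
      _ = A ((S.presheaf.stalkSpecializes (specializes_of_eq hfxy) ≫ f.stalkMap x :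
            S.presheaf.stalk (f.base y) ⟶ _) a) := rfl
  have hBc : (ec ≫ CommRingCat.ofHom (algebraMap (X.presheaf.stalk x) X.functionField) :
      X.presheaf.stalk y ⟶ _) = X.presheaf.stalkSpecializes hηy :=
    CommRingCat.hom_ext (RingHom.ext fun a => hAe a)
  have hw2 : Spec.map (CommRingCat.ofHom (algebraMap (X.presheaf.stalk x) X.functionField)) ≫
      (Spec.map ec ≫ X.fromSpecStalk y) = X.fromSpecStalk (genericPoint X) := by
    rw [← Category.assoc, ← Spec.map_comp]
    erw [hBc]
    rw [Scheme.SpecMap_stalkSpecializes_fromSpecStalk hηy]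
  have hw3 : (Spec.map ec ≫ X.fromSpecStalk y) ≫ f = X.fromSpecStalk x ≫ f := by
    have h1 : X.fromSpecStalk y ≫ f =
        Spec.map (f.stalkMap y) ≫ S.fromSpecStalk (f.base y) :=
      (Scheme.SpecMap_stalkMap_fromSpecStalk f).symm
    have h2 : X.fromSpecStalk x ≫ f =
        Spec.map (f.stalkMap x) ≫ S.fromSpecStalk (f.base x) :=
      (Scheme.SpecMap_stalkMap_fromSpecStalk f).symm
    rw [Category.assoc, h1, h2, ← Category.assoc, ← Spec.map_comp, hclaim, Spec.map_comp,
      Category.assoc, Scheme.SpecMap_stalkSpecializes_fromSpecStalk (specializes_of_eq hfxy)]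
  let Sq : ValuativeCommSq f :=
    { R := X.presheaf.stalk x
      domain := (hval x).1
      valuationRing := ‹ValuationRing (X.presheaf.stalk x)›
      K := X.functionField
      i₁ := X.fromSpecStalk (genericPoint X)
      i₂ := X.fromSpecStalk x ≫ f
      commSq := ⟨by rw [← hw1, Category.assoc]⟩ }
  have hsub : Subsingleton Sq.commSq.LiftStruct := huniq Sq
  let l₁ : Sq.commSq.LiftStruct := ⟨X.fromSpecStalk x, hw1, rfl⟩
  let l₂ : Sq.commSq.LiftStruct := ⟨Spec.map ec ≫ X.fromSpecStalk y, hw2, hw3⟩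
  have hl : l₁ = l₂ := hsub.elim l₁ l₂
  have hbase : (X.fromSpecStalk x).base
        (IsLocalRing.closedPoint (X.presheaf.stalk x)) =
      (Spec.map ec ≫ X.fromSpecStalk y).base
        (IsLocalRing.closedPoint (X.presheaf.stalk x)) :=
    congrArg (fun l : Sq.commSq.LiftStruct =>
      l.l.base (IsLocalRing.closedPoint (X.presheaf.stalk x))) hl
  rw [Scheme.fromSpecStalk_closedPoint] at hbase
  exact hbase.trans ((congrArg (X.fromSpecStalk y) Spec_closedPoint).trans
    Scheme.fromSpecStalk_closedPoint)

end Forward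

end AuxPrufer

/-- Let `X` be an integral scheme all of whose stalks are valuation rings
(a Prüfer scheme) and let `f : X ⟶ S` be a morphism of schemes.  Then `f` is separated if and
only if any two points of `X` with the same image under `f` whose local rings coincide as
subrings of the function field `k(X)` are equal. -/
theorem prufer_separated_iff_localRings_distinguish_points
    {X S : AlgebraicGeometry.Scheme} [IsIntegral X]
    (hval : ∀ x : X, IsValuationRing (X.presheaf.stalk x))
    (f : X ⟶ S) :
    IsSeparated f ↔
      ∀ x y : X, f.base x = f.base y →
        Set.range (algebraMap (X.presheaf.stalk x) X.functionField) =
          Set.range (algebraMap (X.presheaf.stalk y) X.functionField) →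
        x = y := by
  constructor
  · intro hsep x y hfxy hr
    exact aux_forward hval f hsep x y hfxy hr
  · intro H
    exact ⟨IsClosedImmersion.of_isPreimmersion _ (aux_closed hval f H)⟩
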